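/- Suppose h_1 : W → ℝ and g_1 ∈ ℝ satisfy the single-reel Bellman equation h_1(w) = -g_1 + Σ_x p(x)·(c(w,x) + h_1(e(w,x))), and let h_N(w_1,...,w_N) := Σ_n h_1(w_n). Then for any constant θ ∈ ℝ, the function ĥ_N(w_1,...,w_N,x) := (1/N)·Σ_{n=1}^N (c(w_n,x) + h_N(w_1,...,e(w_n,x),...,w_N)) + θ, together with gain g_1, satisfies the augmented N-reel Bellman equation under the random policy: ĥ_N(w_1,...,w_N,x) = -g_1 + (1/N)·Σ_{n=1}^N [ c(w_n,x) + Σ_{x'} p(x')·ĥ_N(w_1,...,e(w_n,x),...,w_N,x') ] for all states. -/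
import Mathlib


open Finset

/-- Updated reel weight. -/
def reelE (B w x : ℕ) : ℕ := if x ≤ w then w - x else B - x

/-- Filament waste (real-valued). -/
def reelC (w x : ℕ) : ℝ := if x ≤ w then 0 else w

lemma sum_h_update {N : ℕ} (h1 : ℕ → ℝ) (t : Fin N → ℕ) (k : Fin N) (v : ℕ) :
    (∑ m : Fin N, h1 (Function.update t k v m))
      = (∑ m : Fin N, h1 (t m)) + (h1 v - h1 (t k)) := by
  have he : (fun m => h1 (Function.update t k v m))
      = Function.update (fun m => h1 (t m)) k (h1 v) := by
    funext m; by_cases h : m = k <;> simp [Function.update, h]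
  calc ∑ m : Fin N, h1 (Function.update t k v m)
      = ∑ m : Fin N, Function.update (fun m => h1 (t m)) k (h1 v) m := by rw [← he]
    _ = _ := by
      rw [Finset.sum_update_of_mem (Finset.mem_univ k),
        Finset.sdiff_singleton_eq_erase, Finset.sum_erase_eq_sub (Finset.mem_univ k)]
      ring

lemma reelE_lt {B w x : ℕ} (hB : 0 < B) (hw : w < B) (hx : 1 ≤ x) :
    reelE B w x < B := by
  unfold reelE; split <;> omega

/-- Theorem 2: if `(g₁, h₁)` solves the single-reel Bellman
equation and `h_N := Σ_n h₁(w_n)`, then for any constant `θ`, the function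
`ĥ_N(w,x) := (1/N)·Σ_n (c(w_n,x) + h_N(w₁,...,e(w_n,x),...,w_N)) + θ`
together with gain `g₁` solves the augmented `N`-reel Bellman equation under
the random policy. -/
theorem augmented_N_reel_bias_formula
    (B N : ℕ) (hB : 0 < B) (hN : 0 < N) (p : ℕ → ℝ)
    (hp0 : ∀ x ∈ Icc 1 B, 0 ≤ p x) (hp1 : ∑ x ∈ Icc 1 B, p x = 1)
    (h1 : ℕ → ℝ) (g1 : ℝ)
    (hBellman : ∀ w < B,
      h1 w = -g1 + ∑ x ∈ Icc 1 B, p x * (reelC w x + h1 (reelE B w x)))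
    (θ : ℝ) (hhat : (Fin N → ℕ) → ℕ → ℝ)
    (hhat_def : ∀ s x, hhat s x =
      (1 / (N : ℝ)) * (∑ n : Fin N, (reelC (s n) x +
        ∑ m : Fin N, h1 (Function.update s n (reelE B (s n) x) m))) + θ) :
    ∀ s : Fin N → ℕ, (∀ n, s n < B) → ∀ x ∈ Icc 1 B,
      hhat s x =
        -g1 + (1 / (N : ℝ)) * ∑ n : Fin N,
          (reelC (s n) x + ∑ x' ∈ Icc 1 B, p x' *
            hhat (Function.update s n (reelE B (s n) x)) x') := by
  have hNne : (N : ℝ) ≠ 0 := Nat.cast_ne_zero.mpr hN.ne'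
  -- key lemma: expected value of hhat at a valid state
  have key : ∀ t : Fin N → ℕ, (∀ k, t k < B) →
      ∑ x' ∈ Icc 1 B, p x' * hhat t x'
        = g1 + θ + ∑ m : Fin N, h1 (t m) := by
    intro t ht
    have hBel : ∀ k : Fin N,
        ∑ x' ∈ Icc 1 B, p x' * (reelC (t k) x' + h1 (reelE B (t k) x'))
          = h1 (t k) + g1 := by
      intro k
      have h := hBellman (t k) (ht k)
      linarith
    have step1 : ∀ x', hhat t x' =
        (1 / (N : ℝ)) * ∑ k : Fin N,
          ((reelC (t k) x' + h1 (reelE B (t k) x'))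
            + ((∑ m : Fin N, h1 (t m)) - h1 (t k))) + θ := by
      intro x'
      rw [hhat_def]
      congr 2
      refine Finset.sum_congr rfl fun k _ => ?_
      rw [sum_h_update]; ring
    calc ∑ x' ∈ Icc 1 B, p x' * hhat t x'
        = ∑ x' ∈ Icc 1 B, ((1 / (N : ℝ)) * ∑ k : Fin N,
            p x' * ((reelC (t k) x' + h1 (reelE B (t k) x'))
              + ((∑ m : Fin N, h1 (t m)) - h1 (t k))) + p x' * θ) := by
          refine Finset.sum_congr rfl fun x' _ => ?_
          rw [step1 x', ← Finset.mul_sum]; ring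
      _ = (1 / (N : ℝ)) * (∑ k : Fin N, ∑ x' ∈ Icc 1 B,
            p x' * ((reelC (t k) x' + h1 (reelE B (t k) x'))
              + ((∑ m : Fin N, h1 (t m)) - h1 (t k)))) + θ := by
          rw [Finset.sum_add_distrib, ← Finset.mul_sum, ← Finset.sum_mul, hp1,
            one_mul, Finset.sum_comm]
      _ = (1 / (N : ℝ)) * (∑ k : Fin N, (g1 + ∑ m : Fin N, h1 (t m))) + θ := by
          congr 1
          congr 1
          refine Finset.sum_congr rfl fun k _ => ?_
          have hsplit : ∑ x' ∈ Icc 1 B, p x' *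
                ((reelC (t k) x' + h1 (reelE B (t k) x'))
                  + ((∑ m : Fin N, h1 (t m)) - h1 (t k)))
              = (∑ x' ∈ Icc 1 B, p x' * (reelC (t k) x' + h1 (reelE B (t k) x')))
                + (∑ x' ∈ Icc 1 B, p x') * ((∑ m : Fin N, h1 (t m)) - h1 (t k)) := by
            rw [Finset.sum_mul, ← Finset.sum_add_distrib]
            exact Finset.sum_congr rfl fun x' _ => by ring
          rw [hsplit, hBel k, hp1]; ring
      _ = g1 + θ + ∑ m : Fin N, h1 (t m) := by
          rw [Finset.sum_const, Finset.card_univ, Fintype.card_fin, nsmul_eq_mul]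
          field_simp
          ring
  -- main computation
  intro s hs x hx
  simp only [Finset.mem_Icc] at hx
  have hupd_lt : ∀ n : Fin N, ∀ k : Fin N,
      Function.update s n (reelE B (s n) x) k < B := by
    intro n k
    by_cases h : k = n
    · subst h; rw [Function.update_self]; exact reelE_lt hB (hs k) hx.1
    · rw [Function.update_of_ne h]; exact hs k
  have hkey : ∀ n : Fin N,
      ∑ x' ∈ Icc 1 B, p x' * hhat (Function.update s n (reelE B (s n) x)) x'
        = g1 + θ + ∑ m : Fin N, h1 (Function.update s n (reelE B (s n) x) m) :=
    fun n => key _ (hupd_lt n)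
  rw [hhat_def]
  have hrw : ∑ n : Fin N, (reelC (s n) x + ∑ x' ∈ Icc 1 B, p x' *
        hhat (Function.update s n (reelE B (s n) x)) x')
      = (∑ n : Fin N, (reelC (s n) x +
          ∑ m : Fin N, h1 (Function.update s n (reelE B (s n) x) m)))
        + (N : ℝ) * (g1 + θ) := by
    rw [Finset.sum_add_distrib, Finset.sum_add_distrib]
    simp only [hkey]
    rw [Finset.sum_add_distrib, Finset.sum_const, Finset.card_univ,
      Fintype.card_fin, nsmul_eq_mul]
    ring
  rw [hrw]
  field_simp
  ring
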